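/- The binary operation on the nonnegative integers defined by a ∘ b = min(a,b) − 1 if a > 0 and b > 0, and a ∘ b = 0 otherwise (equivalently, a ∘ b = min(a,b) ∸ 1 with truncated subtraction on ℕ), is a Catalan operation: any two distinct bracketings of the same size induce distinct regular operations over it. (Paper's Proposition 6.3.) -/

import Mathlib

/-- A bracketing of size `n`: a full binary tree with `n` leaves. -/
inductive Bracketing : ℕ → Type
  | leaf : Bracketing 1
  | node : {k l : ℕ} → Bracketing k → Bracketing l → Bracketing (k + l)

/-- The `n`-ary regular operation induced by a bracketing on a magma `(G, op)`. -/
def Bracketing.eval {G : Type*} (op : G → G → G) : {n : ℕ} → Bracketing n → (Fin n → G) → G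
  | _, .leaf, v => v 0
  | _, .node P Q, v =>
      op (Bracketing.eval op P (fun i => v (Fin.castAdd _ i)))
         (Bracketing.eval op Q (fun i => v (Fin.natAdd _ i)))

/-- The associative spectrum: the number of distinct `n`-ary regular operations. -/
noncomputable def assocSpectrum {G : Type*} (op : G → G → G) (n : ℕ) : ℕ :=
  Nat.card {f : (Fin n → G) → G // ∃ B : Bracketing n, f = Bracketing.eval op B}

/-- The depth of the `i`-th leaf of a bracketing. -/
def Bracketing.depth : {n : ℕ} → Bracketing n → Fin n → ℕ
  | _, .leaf, _ => 0
  | _, .node (k := k) P Q, i =>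
      if h : (i : ℕ) < k then Bracketing.depth P ⟨i, h⟩ + 1
      else Bracketing.depth Q ⟨(i : ℕ) - k, by have := i.isLt; omega⟩ + 1

/-- The right depth of the `i`-th leaf of a bracketing. -/
def Bracketing.rdepth : {n : ℕ} → Bracketing n → Fin n → ℕ
  | _, .leaf, _ => 0
  | _, .node (k := k) P Q, i =>
      if h : (i : ℕ) < k then Bracketing.rdepth P ⟨i, h⟩
      else Bracketing.rdepth Q ⟨(i : ℕ) - k, by have := i.isLt; omega⟩ + 1

/-- The left depth of the `i`-th leaf of a bracketing. -/
def Bracketing.ldepth : {n : ℕ} → Bracketing n → Fin n → ℕ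
  | _, .leaf, _ => 0
  | _, .node (k := k) P Q, i =>
      if h : (i : ℕ) < k then Bracketing.ldepth P ⟨i, h⟩ + 1
      else Bracketing.ldepth Q ⟨(i : ℕ) - k, by have := i.isLt; omega⟩

/-- A magma operation is Catalan if distinct bracketings of equal size
    induce distinct regular operations. -/
def IsCatalanOp {G : Type*} (op : G → G → G) : Prop :=
  ∀ (n : ℕ) (B₁ B₂ : Bracketing n), B₁ ≠ B₂ →
    Bracketing.eval op B₁ ≠ Bracketing.eval op B₂


namespace Bracketing

lemma size_pos : ∀ {n : ℕ}, Bracketing n → 1 ≤ n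
  | _, .leaf => le_refl 1
  | _, .node P Q => le_trans (size_pos P) (Nat.le_add_right _ _)

lemma depth_of_lt {k l : ℕ} (P : Bracketing k) (Q : Bracketing l) (i : Fin (k + l))
    (h : (i : ℕ) < k) : depth (node P Q) i = depth P ⟨i, h⟩ + 1 := by
  simp [depth, h]

lemma depth_of_ge {k l : ℕ} (P : Bracketing k) (Q : Bracketing l) (i : Fin (k + l))
    (h : ¬ (i : ℕ) < k) : depth (node P Q) i
      = depth Q ⟨(i : ℕ) - k, by have := i.isLt; omega⟩ + 1 := by
  simp [depth, h]

lemma depth_castAdd {k l : ℕ} (P : Bracketing k) (Q : Bracketing l) (i : Fin k) :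
    depth (node P Q) (Fin.castAdd l i) = depth P i + 1 := by
  rw [depth_of_lt P Q _ (by simpa using i.isLt)]
  congr 1

lemma depth_natAdd {k l : ℕ} (P : Bracketing k) (Q : Bracketing l) (i : Fin l) :
    depth (node P Q) (Fin.natAdd k i) = depth Q i + 1 := by
  rw [depth_of_ge P Q _ (Nat.not_lt.mpr (Nat.le_add_right k i.1))]
  congr 1
  refine congrArg Q.depth ?_
  apply Fin.ext
  show k + i.1 - k = i.1
  omega

lemma kraft : ∀ {n : ℕ} (B : Bracketing n), ∑ i, ((2:ℚ) ^ B.depth i)⁻¹ = 1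
  | _, .leaf => by simp [depth]
  | _, .node P Q => by
    rw [Fin.sum_univ_add]
    simp only [depth_castAdd, depth_natAdd, pow_succ, mul_inv]
    rw [← Finset.sum_mul, ← Finset.sum_mul, kraft P, kraft Q]
    norm_num

lemma half {k : ℕ} (P : Bracketing k) : ∑ i, ((2:ℚ) ^ (P.depth i + 1))⁻¹ = 1/2 := by
  simp only [pow_succ, mul_inv]
  rw [← Finset.sum_mul, kraft P]
  norm_num

lemma sum_lt {k₁ k₂ : ℕ} (P : Bracketing k₂) (hlt : k₁ < k₂) :
    ∑ i : Fin k₁, ((2:ℚ) ^ (P.depth (Fin.castLE hlt.le i) + 1))⁻¹ < 1/2 := by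
  rw [← half P]
  rw [show (∑ i : Fin k₁, ((2:ℚ) ^ (P.depth (Fin.castLE hlt.le i) + 1))⁻¹)
      = ∑ j ∈ Finset.univ.map (Fin.castLEEmb hlt.le), ((2:ℚ) ^ (P.depth j + 1))⁻¹ by
    rw [Finset.sum_map]; rfl]
  apply Finset.sum_lt_sum_of_subset (Finset.subset_univ _) (Finset.mem_univ ⟨k₁, hlt⟩)
  · intro hmem
    simp only [Finset.mem_map, Finset.mem_univ, true_and] at hmem
    obtain ⟨x, hx⟩ := hmem
    have hv : (x : ℕ) = k₁ := congrArg Fin.val hx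
    have := x.isLt
    omega
  · positivity
  · intro j _ _; positivity

lemma not_lt_of_depth_eq {k₁ l₁ k₂ l₂ : ℕ} (P₁ : Bracketing k₁) (Q₁ : Bracketing l₁)
    (P₂ : Bracketing k₂) (Q₂ : Bracketing l₂) (h : k₁ + l₁ = k₂ + l₂)
    (hpt : ∀ i : Fin (k₁ + l₁),
      depth (node P₁ Q₁) i = depth (node P₂ Q₂) (Fin.cast h i)) :
    ¬ k₁ < k₂ := by
  intro hlt
  have key : ∀ i : Fin k₁,
      P₁.depth i + 1 = P₂.depth (Fin.castLE hlt.le i) + 1 := by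
    intro i
    have h1 := hpt (Fin.castAdd l₁ i)
    rw [depth_castAdd] at h1
    have hv : ((Fin.cast h (Fin.castAdd l₁ i)) : ℕ) < k₂ := by
      have : ((Fin.cast h (Fin.castAdd l₁ i)) : ℕ) = (i : ℕ) := rfl
      have := i.isLt
      omega
    rw [depth_of_lt P₂ Q₂ _ hv] at h1
    rw [h1]
    congr 2
  have hsum : ∑ i : Fin k₁, ((2:ℚ) ^ (P₂.depth (Fin.castLE hlt.le i) + 1))⁻¹ = 1/2 := by
    rw [← half P₁]
    exact Finset.sum_congr rfl (fun i _ => by rw [key i])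
  have := sum_lt P₂ hlt
  linarith

lemma depth_heq : ∀ {n : ℕ} (B₁ : Bracketing n) {m : ℕ} (B₂ : Bracketing m) (h : n = m),
    (∀ i : Fin n, B₁.depth i = B₂.depth (Fin.cast h i)) → HEq B₁ B₂ := by
  intro n B₁
  induction B₁ with
  | leaf =>
    intro m B₂ h hpt
    cases B₂ with
    | leaf => exact HEq.rfl
    | @node k₂ l₂ P₂ Q₂ =>
      exfalso
      have := size_pos P₂; have := size_pos Q₂; omega
  | @node k₁ l₁ P₁ Q₁ ihP ihQ =>
    intro m B₂ h hpt
    cases B₂ with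
    | leaf =>
      exfalso
      have := size_pos P₁; have := size_pos Q₁; omega
    | @node k₂ l₂ P₂ Q₂ =>
      have hpt' : ∀ j : Fin (k₂ + l₂),
          depth (node P₂ Q₂) j = depth (node P₁ Q₁) (Fin.cast h.symm j) := by
        intro j
        rw [hpt (Fin.cast h.symm j)]
        congr 1
      have hk : k₁ = k₂ := by
        have h1 := not_lt_of_depth_eq P₁ Q₁ P₂ Q₂ h hpt
        have h2 := not_lt_of_depth_eq P₂ Q₂ P₁ Q₁ h.symm hpt'
        omega
      subst hk
      have hl : l₁ = l₂ := by omega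
      subst hl
      have hcast : ∀ x : Fin (k₁ + l₁), Fin.cast h x = x := fun x => Fin.ext rfl
      simp only [hcast] at hpt
      have eP : P₁ = P₂ := by
        apply eq_of_heq
        apply ihP P₂ rfl
        intro i
        have h1 := hpt (Fin.castAdd l₁ i)
        rw [depth_castAdd, depth_castAdd] at h1
        have : Fin.cast rfl i = i := Fin.ext rfl
        rw [this]
        omega
      have eQ : Q₁ = Q₂ := by
        apply eq_of_heq
        apply ihQ Q₂ rfl
        intro i
        have h1 := hpt (Fin.natAdd k₁ i)
        rw [depth_natAdd, depth_natAdd] at h1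
        have : Fin.cast rfl i = i := Fin.ext rfl
        rw [this]
        omega
      rw [eP, eQ]

lemma depth_inj {n : ℕ} (B₁ B₂ : Bracketing n) (h : B₁.depth = B₂.depth) : B₁ = B₂ := by
  apply eq_of_heq
  apply depth_heq B₁ B₂ rfl
  intro i
  have : Fin.cast rfl i = i := Fin.ext rfl
  rw [this, h]

lemma eval_le : ∀ {n : ℕ} (B : Bracketing n) (v : Fin n → ℕ) (i : Fin n),
    Bracketing.eval (fun a b : ℕ => min a b - 1) B v ≤ v i - B.depth i
  | _, .leaf, v, i => by
    rw [Subsingleton.elim i 0]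
    simp [eval, depth]
  | _, .node (k := k) (l := l) P Q, v, i => by
    show min (eval _ P fun j => v (Fin.castAdd l j)) (eval _ Q fun j => v (Fin.natAdd k j)) - 1
      ≤ v i - depth (node P Q) i
    by_cases h : (i : ℕ) < k
    · have h1 := eval_le P (fun j => v (Fin.castAdd l j)) ⟨i, h⟩
      have hv : Fin.castAdd l (⟨(i : ℕ), h⟩ : Fin k) = i := Fin.ext rfl
      rw [hv] at h1
      rw [depth_of_lt P Q i h]
      have := min_le_left (eval (fun a b : ℕ => min a b - 1) P fun j => v (Fin.castAdd l j))
        (eval (fun a b : ℕ => min a b - 1) Q fun j => v (Fin.natAdd k j))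
      omega
    · have h1 := eval_le Q (fun j => v (Fin.natAdd k j)) ⟨(i : ℕ) - k, by have := i.isLt; omega⟩
      have hv : Fin.natAdd k (⟨(i : ℕ) - k, by have := i.isLt; omega⟩ : Fin l) = i :=
        Fin.ext (by show k + ((i : ℕ) - k) = (i : ℕ); omega)
      rw [hv] at h1
      rw [depth_of_ge P Q i h]
      have := min_le_right (eval (fun a b : ℕ => min a b - 1) P fun j => v (Fin.castAdd l j))
        (eval (fun a b : ℕ => min a b - 1) Q fun j => v (Fin.natAdd k j))
      omega

lemma eval_exists : ∀ {n : ℕ} (B : Bracketing n) (v : Fin n → ℕ),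
    ∃ i : Fin n, Bracketing.eval (fun a b : ℕ => min a b - 1) B v = v i - B.depth i
  | _, .leaf, v => ⟨0, by simp [eval, depth]⟩
  | _, .node (k := k) (l := l) P Q, v => by
    obtain ⟨i, hi⟩ := eval_exists P (fun j => v (Fin.castAdd l j))
    obtain ⟨j, hj⟩ := eval_exists Q (fun j => v (Fin.natAdd k j))
    by_cases hc : eval (fun a b : ℕ => min a b - 1) P (fun j => v (Fin.castAdd l j))
        ≤ eval (fun a b : ℕ => min a b - 1) Q (fun j => v (Fin.natAdd k j))
    · refine ⟨Fin.castAdd l i, ?_⟩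
      show min _ _ - 1 = _
      rw [min_eq_left hc, depth_castAdd, hi]
      omega
    · refine ⟨Fin.natAdd k j, ?_⟩
      show min _ _ - 1 = _
      rw [min_eq_right (le_of_not_ge hc), depth_natAdd, hj]
      omega

lemma eval_ne {n : ℕ} (B₁ B₂ : Bracketing n) (i : Fin n) (h : B₁.depth i < B₂.depth i) :
    Bracketing.eval (fun a b : ℕ => min a b - 1) B₁ ≠
      Bracketing.eval (fun a b : ℕ => min a b - 1) B₂ := by
  intro he
  have hn : 1 ≤ n := size_pos B₁
  have h1 : Bracketing.eval (fun a b : ℕ => min a b - 1) B₁ (fun j => n + B₁.depth j) = n := by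
    obtain ⟨i₀, hi₀⟩ := eval_exists B₁ (fun j => n + B₁.depth j)
    rw [hi₀]
    simp
  have h2 := eval_le B₂ (fun j => n + B₁.depth j) i
  try simp only at h2
  rw [he] at h1
  rw [h1] at h2
  omega

end Bracketing

/-- Paper's Proposition 6.3: the operation `a ∘ b = min(a,b) ∸ 1` (truncated subtraction)
on the nonnegative integers is Catalan. -/
theorem stmt18 : IsCatalanOp (fun a b : ℕ => min a b - 1) := by
  intro n B₁ B₂ hne heq
  apply hne
  apply Bracketing.depth_inj
  funext i
  by_contra hi
  rcases lt_or_gt_of_ne hi with hlt | hgt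
  · exact Bracketing.eval_ne B₁ B₂ i hlt heq
  · exact Bracketing.eval_ne B₂ B₁ i hgt heq.symm
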